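/- In A_{q,n}, the intersection of the ideal q_1 generated by x_2, …, x_q with the ideal m² equals the product ideal q_1·m, i.e. q_1 ∩ m² = q_1·m. -/

import Mathlib

set_option synthInstance.maxHeartbeats 400000

noncomputable section

/-- The ring of `n`-nil polynomials `A_{q,n} = k[x_1,…,x_q]/m_0^n`. -/
abbrev Aqn (k : Type) [Field k] (q n : ℕ) : Type :=
  MvPolynomial (Fin q) k ⧸
    (Ideal.span (Set.range (MvPolynomial.X : Fin q → MvPolynomial (Fin q) k))) ^ n

/-- The image of the variable `x_i` in `A_{q,n}`. -/
def xA (k : Type) [Field k] (q n : ℕ) (i : Fin q) : Aqn k q n :=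
  Ideal.Quotient.mk _ (MvPolynomial.X i)

/-- The maximal ideal `m` of `A_{q,n}` generated by `x_1, …, x_q`. -/
def mA (k : Type) [Field k] (q n : ℕ) : Ideal (Aqn k q n) :=
  Ideal.span (Set.range (xA k q n))

/-- The ideal `q_1` of `A_{q,n}` generated by `x_2, …, x_q`. -/
def q1A (k : Type) [Field k] (q n : ℕ) [NeZero q] : Ideal (Aqn k q n) :=
  Ideal.span {y | ∃ i : Fin q, i ≠ 0 ∧ y = xA k q n i}



namespace Q1Aux
open MvPolynomial Pointwise

variable (k : Type) [Field k] (q : ℕ)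

abbrev P : Type := MvPolynomial (Fin q) k

def m0 : Ideal (P k q) := Ideal.span (Set.range X)

def Q1 [NeZero q] : Ideal (P k q) :=
  Ideal.span {p : P k q | ∃ i : Fin q, i ≠ 0 ∧ p = X i}

variable {k q}

lemma sub_C_mem (f : P k q) : f - C (constantCoeff f) ∈ m0 k q := by
  induction f using MvPolynomial.induction_on with
  | C a => simp
  | add p r hp hr =>
      have h : (p + r) - C (constantCoeff (p + r))
          = (p - C (constantCoeff p)) + (r - C (constantCoeff r)) := by
        rw [map_add, map_add]; ring
      rw [h]; exact add_mem hp hr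
  | mul_X p i hp =>
      have h1 : constantCoeff (p * X i) = 0 := by simp
      rw [h1, map_zero, sub_zero]
      exact Ideal.mul_mem_left _ _ (Ideal.subset_span ⟨i, rfl⟩)

lemma mem_m0_sq {j : Fin q} {f : P k q} (hf : f ∈ (m0 k q) ^ 2) :
    constantCoeff f = 0 ∧ constantCoeff (pderiv j f) = 0 := by
  have h2 : (m0 k q) ^ 2 = Ideal.span
      (Set.range (X : Fin q → P k q) * Set.range (X : Fin q → P k q)) := by
    rw [pow_two, m0, Ideal.span_mul_span']
  rw [h2] at hf
  refine Submodule.span_induction ?_ ?_ ?_ ?_ hf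
  · rintro x hx
    rw [Set.mem_mul] at hx
    obtain ⟨a, ⟨i, rfl⟩, b, ⟨i', rfl⟩, rfl⟩ := hx
    constructor
    · simp
    · simp [pderiv_mul, map_add, map_mul]
  · simp
  · rintro x y hx hy ⟨hx1, hx2⟩ ⟨hy1, hy2⟩
    exact ⟨by simp [hx1, hy1], by simp [hx2, hy2]⟩
  · rintro r x hx ⟨hx1, hx2⟩
    rw [smul_eq_mul]
    constructor
    · simp [map_mul, hx1]
    · rw [pderiv_mul, map_add, map_mul, map_mul, hx1, hx2]; ring

lemma cc_pderiv_sum (c : Fin q → k) (j : Fin q) :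
    constantCoeff (pderiv j (∑ i, C (c i) * X i)) = c j := by
  classical
  rw [map_sum, map_sum]
  rw [Finset.sum_eq_single j]
  · simp [pderiv_C_mul]
  · intro i _ hij
    simp [pderiv_C_mul, pderiv_X_of_ne hij]
  · simp

lemma Q1_le_m0 [NeZero q] : Q1 k q ≤ m0 k q :=
  Ideal.span_le.2 (by rintro x ⟨i, hi, rfl⟩; exact Ideal.subset_span ⟨i, rfl⟩)

lemma Q1_decomp [NeZero q] {f : P k q} (hf : f ∈ Q1 k q) :
    ∃ g ∈ Q1 k q * m0 k q, ∃ c : Fin q → k,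
      c 0 = 0 ∧ f = g + ∑ i, C (c i) * X i := by
  classical
  refine Submodule.span_induction ?_ ?_ ?_ ?_ hf
  · rintro x ⟨i, hi, rfl⟩
    refine ⟨0, zero_mem _, Pi.single i 1, by simp [Pi.single_eq_of_ne (Ne.symm hi)], ?_⟩
    rw [zero_add, Finset.sum_eq_single i]
    · simp
    · intro b _ hbi; simp [Pi.single_eq_of_ne hbi]
    · simp
  · exact ⟨0, zero_mem _, 0, rfl, by simp⟩
  · rintro x y hx hy ⟨g1, hg1, c1, hc1, rfl⟩ ⟨g2, hg2, c2, hc2, rfl⟩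
    refine ⟨g1 + g2, add_mem hg1 hg2, c1 + c2, by simp [hc1, hc2], ?_⟩
    simp only [Pi.add_apply, map_add, add_mul, Finset.sum_add_distrib]
    ring
  · rintro r x hx ⟨g, hg, c, hc, rfl⟩
    rw [smul_eq_mul]
    have hl : (∑ i, C (c i) * X i) ∈ Q1 k q := by
      refine Submodule.sum_mem _ fun i _ => ?_
      by_cases h : i = 0
      · subst h; rw [hc]; simp
      · exact Ideal.mul_mem_left _ _ (Ideal.subset_span ⟨i, h, rfl⟩)
    have hr1 : r - C (constantCoeff r) ∈ m0 k q := sub_C_mem r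
    refine ⟨r * g + (∑ i, C (c i) * X i) * (r - C (constantCoeff r)),
      add_mem (Ideal.mul_mem_left _ _ hg) (Ideal.mul_mem_mul hl hr1),
      fun i => constantCoeff r * c i, by simp [hc], ?_⟩
    have : ∑ i, C (constantCoeff r * c i) * X i
        = C (constantCoeff r) * ∑ i, C (c i) * X i := by
      rw [Finset.mul_sum]
      refine Finset.sum_congr rfl fun i _ => by rw [map_mul]; ring
    rw [this]
    ring

/-- Key fact in the polynomial ring:  Q1 ⊓ m0² = Q1 * m0. -/
lemma Q1_inf_m0_sq [NeZero q] : Q1 k q ⊓ (m0 k q) ^ 2 = Q1 k q * m0 k q := by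
  apply le_antisymm
  · rintro f ⟨hf1, hf2⟩
    obtain ⟨g, hg, c, hc0, rfl⟩ := Q1_decomp hf1
    have hgm : g ∈ (m0 k q) ^ 2 := by
      rw [pow_two]
      exact Ideal.mul_mono Q1_le_m0 le_rfl hg
    have hl : (∑ i, C (c i) * X i) ∈ (m0 k q) ^ 2 := by
      have := Submodule.sub_mem _ hf2 hgm
      simpa using this
    have hcz : ∀ j, c j = 0 := by
      intro j
      have := (mem_m0_sq (j := j) hl).2
      rwa [cc_pderiv_sum] at this
    have : (∑ i, C (c i) * X i) = 0 := by
      refine Finset.sum_eq_zero fun i _ => by rw [hcz i]; simp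
    rw [this, add_zero]
    exact hg
  · exact le_inf (Ideal.mul_le_inf.trans inf_le_left) (by
      rw [pow_two]; exact Ideal.mul_mono Q1_le_m0 le_rfl)

end Q1Aux

/-- in `A_{q,n}` one has `q_1 ∩ m² = q_1·m`. -/
theorem q1_inf_m_sq_eq_q1_mul_m (k : Type) [Field k] (q n : ℕ) [NeZero q]
    (hq : 2 ≤ q) (hn : 2 ≤ n) :
    q1A k q n ⊓ (mA k q n) ^ 2 = q1A k q n * mA k q n := by
  classical
  set π : MvPolynomial (Fin q) k →+* Aqn k q n := Ideal.Quotient.mk _ with hπ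
  have surj : Function.Surjective π := Ideal.Quotient.mk_surjective
  have hker : Ideal.comap π ⊥ = (Q1Aux.m0 k q) ^ n := by
    rw [← RingHom.ker_eq_comap_bot]
    exact Ideal.mk_ker
  have hq1 : q1A k q n = Ideal.map π (Q1Aux.Q1 k q) := by
    rw [q1A, Q1Aux.Q1, Ideal.map_span]
    congr 1
    ext y
    constructor
    · rintro ⟨i, hi, rfl⟩
      exact ⟨MvPolynomial.X i, ⟨i, hi, rfl⟩, rfl⟩
    · rintro ⟨p, ⟨i, hi, rfl⟩, rfl⟩
      exact ⟨i, hi, rfl⟩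
  have hm : mA k q n = Ideal.map π (Q1Aux.m0 k q) := by
    rw [mA, Q1Aux.m0, Ideal.map_span]
    congr 1
    ext y
    constructor
    · rintro ⟨i, rfl⟩
      exact ⟨MvPolynomial.X i, ⟨i, rfl⟩, rfl⟩
    · rintro ⟨p, ⟨i, rfl⟩, rfl⟩
      exact ⟨i, rfl⟩
  have hK2 : (Q1Aux.m0 k q) ^ n ≤ (Q1Aux.m0 k q) ^ 2 :=
    Ideal.pow_le_pow_right hn
  have hbot : Ideal.map π ((Q1Aux.m0 k q) ^ n) = ⊥ := Ideal.map_quotient_self _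
  have h1 : Ideal.comap π (Ideal.map π (Q1Aux.Q1 k q))
      = (Q1Aux.m0 k q) ^ n ⊔ Q1Aux.Q1 k q := by
    rw [Ideal.comap_map_of_surjective π surj, hker, sup_comm]
  have h2 : Ideal.comap π (Ideal.map π ((Q1Aux.m0 k q) ^ 2)) = (Q1Aux.m0 k q) ^ 2 := by
    rw [Ideal.comap_map_of_surjective π surj, hker, sup_eq_left.2 hK2]
  rw [hq1, hm, ← Ideal.map_pow, ← Ideal.map_mul]
  calc Ideal.map π (Q1Aux.Q1 k q) ⊓ Ideal.map π ((Q1Aux.m0 k q) ^ 2)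
      = Ideal.map π (Ideal.comap π (Ideal.map π (Q1Aux.Q1 k q))
          ⊓ Ideal.comap π (Ideal.map π ((Q1Aux.m0 k q) ^ 2))) := by
        rw [← Ideal.comap_inf, Ideal.map_comap_of_surjective π surj]
    _ = Ideal.map π (((Q1Aux.m0 k q) ^ n ⊔ Q1Aux.Q1 k q) ⊓ (Q1Aux.m0 k q) ^ 2) := by
        rw [h1, h2]
    _ = Ideal.map π ((Q1Aux.m0 k q) ^ n ⊔ (Q1Aux.Q1 k q ⊓ (Q1Aux.m0 k q) ^ 2)) := by
        rw [sup_inf_assoc_of_le _ hK2]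
    _ = Ideal.map π ((Q1Aux.m0 k q) ^ n) ⊔ Ideal.map π (Q1Aux.Q1 k q * Q1Aux.m0 k q) := by
        rw [Ideal.map_sup, Q1Aux.Q1_inf_m0_sq]
    _ = Ideal.map π (Q1Aux.Q1 k q * Q1Aux.m0 k q) := by
        rw [hbot, bot_sup_eq]
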